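/- arXiv:1104.1681 — 5 statements merged into one kernel-verified Lean document; each statement's English description precedes it below -/
import Mathlib

section
/- Let G be a topological group acting continuously on a topological space X. If V ⊆ G and U ⊆ X are open sets, then the set V·U = {g·x : g ∈ V, x ∈ U} equals the union of the sets g·U over all g in any fixed dense subset D of G that lie in V, i.e., V·U = ⋃ {g·U : g ∈ D ∩ V}. -/
open Set Topology Pointwise

/-- If `V ⊆ G` and `U ⊆ X` are open and `D ⊆ G` is dense, then
`V • U = ⋃ {g • U : g ∈ D ∩ V}`. -/
theorem open_smul_eq_iUnion_dense {G X : Type*} [Group G] [TopologicalSpace G]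
    [IsTopologicalGroup G] [TopologicalSpace X] [MulAction G X] [ContinuousSMul G X]
    {V : Set G} {U : Set X} (hV : IsOpen V) (hU : IsOpen U)
    {D : Set G} (hD : Dense D) :
    V • U = ⋃ g ∈ D ∩ V, g • U := by
  apply Set.Subset.antisymm
  · rintro y ⟨g, hg, x, hx, rfl⟩
    have hcont : Continuous fun f : G => f⁻¹ • (g • x) :=
      (continuous_inv).smul continuous_const
    have hopen : IsOpen {f : G | f⁻¹ • (g • x) ∈ U} := hU.preimage hcont
    have hmem : g ∈ {f : G | f⁻¹ • (g • x) ∈ U} ∩ V := by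
      constructor
      · simpa using hx
      · exact hg
    obtain ⟨f, hfD, hf⟩ := hD.exists_mem_open (hopen.inter hV) ⟨g, hmem⟩
    refine Set.mem_biUnion ⟨hfD, hf.2⟩ ?_
    exact ⟨f⁻¹ • (g • x), hf.1, by simp⟩
  · refine Set.iUnion₂_subset fun f hf => ?_
    rintro y ⟨x, hx, rfl⟩
    exact ⟨f, hf.2, x, hx, rfl⟩
end

section
/- With Hjorth's relations ≤_α defined as in the context, each relation ≤_α is transitive: if (z,U) ≤_α (y,V) and (y,V) ≤_α (x,W), then (z,U) ≤_α (x,W). -/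
open Set Topology Pointwise

/-- Hjorth's back-and-forth relation. `HLe Bas α y V x W` corresponds to
`(y,V) ≤_{1+α} (x,W)` of the paper (so `HLe Bas 0` is `≤₁`):
`(y,V) ≤₁ (x,W)` iff `cl(V·y) ⊆ cl(W·x)`;
`(y,V) ≤_{α+1} (x,W)` iff for every basic open `V' ⊆ V` there is a basic open
`W' ⊆ W` with `(x,W') ≤_α (y,V')`; limit stages are intersections. -/
noncomputable def HLe {G X : Type*} [SMul G X] [TopologicalSpace X] (Bas : Set (Set G)) :
    Ordinal → X → Set G → X → Set G → Prop := fun α =>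
  Ordinal.limitRecOn (motive := fun _ => X → Set G → X → Set G → Prop) α
    (fun y V x W => closure ((· • y) '' V) ⊆ closure ((· • x) '' W))
    (fun _ ih => fun y V x W => ∀ V' ∈ Bas, V' ⊆ V → ∃ W' ∈ Bas, W' ⊆ W ∧ ih x W' y V')
    (fun o _ ih => fun y V x W => ∀ β, ∀ h : β < o, ih β h y V x W)



lemma HLe_zero {G X : Type*} [SMul G X] [TopologicalSpace X] (Bas : Set (Set G))
    (y : X) (V : Set G) (x : X) (W : Set G) :
    HLe Bas 0 y V x W ↔ closure ((· • y) '' V) ⊆ closure ((· • x) '' W) := by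
  simp [HLe]

lemma HLe_succ {G X : Type*} [SMul G X] [TopologicalSpace X] (Bas : Set (Set G))
    (α : Ordinal) (y : X) (V : Set G) (x : X) (W : Set G) :
    HLe Bas (Order.succ α) y V x W ↔
      ∀ V' ∈ Bas, V' ⊆ V → ∃ W' ∈ Bas, W' ⊆ W ∧ HLe Bas α x W' y V' := by
  simp [HLe, Ordinal.limitRecOn_succ]

lemma HLe_limit {G X : Type*} [SMul G X] [TopologicalSpace X] (Bas : Set (Set G))
    {α : Ordinal} (h : Order.IsSuccLimit α) (y : X) (V : Set G) (x : X) (W : Set G) :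
    HLe Bas α y V x W ↔ ∀ β < α, HLe Bas β y V x W := by
  simp [HLe, Ordinal.limitRecOn_limit _ _ _ _ h]

lemma hLe_trans_aux {G X : Type*} [SMul G X] [TopologicalSpace X] (Bas : Set (Set G))
    (α : Ordinal) : ∀ (x y z : X) (U V W : Set G), U ∈ Bas → V ∈ Bas → W ∈ Bas →
    HLe Bas α z U y V → HLe Bas α y V x W → HLe Bas α z U x W := by
  induction α using Ordinal.limitRecOn with
  | zero =>
    intro x y z U V W _ _ _ h1 h2
    rw [HLe_zero] at *
    exact h1.trans h2
  | add_one α ih =>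
    intro x y z U V W hU hV hW h1 h2
    rw [← Order.succ_eq_add_one] at *
    rw [HLe_succ] at *
    intro U' hU' hU'U
    obtain ⟨V', hV', hV'V, hVU⟩ := h1 U' hU' hU'U
    obtain ⟨W', hW', hW'W, hWV⟩ := h2 V' hV' hV'V
    exact ⟨W', hW', hW'W, ih z y x W' V' U' hW' hV' hU' hWV hVU⟩
  | limit α hlim ih =>
    intro x y z U V W hU hV hW h1 h2
    rw [HLe_limit Bas hlim] at *
    intro β hβ
    exact ih β hβ x y z U V W hU hV hW (h1 β hβ) (h2 β hβ)

/-- Each Hjorth relation `≤_α` is transitive. -/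
theorem hLe_trans {G X : Type*} [Group G] [TopologicalSpace G] [IsTopologicalGroup G]
    [PolishSpace G] [TopologicalSpace X] [PolishSpace X] [MulAction G X]
    [ContinuousSMul G X] (Bas : Set (Set G)) (hBas : TopologicalSpace.IsTopologicalBasis Bas)
    (hcnt : Bas.Countable) {α : Ordinal} (hαc : α.card ≤ Cardinal.aleph0)
    {x y z : X} {U V W : Set G} (hU : U ∈ Bas) (hV : V ∈ Bas) (hW : W ∈ Bas)
    (h1 : HLe Bas α z U y V) (h2 : HLe Bas α y V x W) : HLe Bas α z U x W := by
  exact hLe_trans_aux Bas α x y z U V W hU hV hW h1 h2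
end

section
/- Let G be a Polish group acting continuously on a Polish space X, with countable bases {V_k} for G and {U_i} for X. Then for x, y ∈ X and indices k, n: cl(V_k·y) ⊆ cl(V_n·x) if and only if for every i ∈ ω, y ∈ V_k⁻¹·U_i implies x ∈ V_n⁻¹·U_i. -/
open Set Topology Pointwise

/-- Membership in `S⁻¹ • T` unfolded. -/
lemma mem_inv_smul_iff' {G X : Type*} [Group G] [MulAction G X]
    (S : Set G) (T : Set X) (z : X) :
    z ∈ S⁻¹ • T ↔ ∃ g ∈ S, g • z ∈ T := by
  constructor
  · rintro ⟨g, hg, u, hu, rfl⟩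
    refine ⟨g⁻¹, by simpa using hg, by simpa using hu⟩
  · rintro ⟨g, hg, hu⟩
    exact ⟨g⁻¹, by simpa using hg, g • z, hu, by simp⟩

/-- `cl(V_k·y) ⊆ cl(V_n·x)` iff for every `i`, `y ∈ V_k⁻¹ • U_i → x ∈ V_n⁻¹ • U_i`. -/
theorem closure_smul_subset_iff {G X : Type*} [Group G] [TopologicalSpace G]
    [IsTopologicalGroup G] [PolishSpace G] [TopologicalSpace X] [PolishSpace X]
    [MulAction G X] [ContinuousSMul G X]
    (V : ℕ → Set G) (hV : TopologicalSpace.IsTopologicalBasis (Set.range V))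
    (U : ℕ → Set X) (hU : TopologicalSpace.IsTopologicalBasis (Set.range U))
    (x y : X) (k n : ℕ) :
    closure ((· • y) '' V k) ⊆ closure ((· • x) '' V n) ↔
      ∀ i : ℕ, y ∈ (V k)⁻¹ • U i → x ∈ (V n)⁻¹ • U i := by
  constructor
  · intro h i hy
    rw [mem_inv_smul_iff'] at hy
    obtain ⟨g, hg, hgy⟩ := hy
    have hmem : g • y ∈ closure ((· • x) '' V n) :=
      h (subset_closure ⟨g, hg, rfl⟩)
    have hUi : IsOpen (U i) := hU.isOpen (mem_range_self i)
    obtain ⟨z, hzU, g', hg', rfl⟩ :=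
      (mem_closure_iff.mp hmem) (U i) hUi hgy
    exact (mem_inv_smul_iff' _ _ _).mpr ⟨g', hg', hzU⟩
  · intro h
    refine closure_minimal ?_ isClosed_closure
    rintro _ ⟨g, hg, rfl⟩
    rw [mem_closure_iff]
    intro O hO hgO
    obtain ⟨_, ⟨i, rfl⟩, hgi, hiO⟩ := hU.exists_subset_of_mem_open hgO hO
    have hx := h i ((mem_inv_smul_iff' _ _ _).mpr ⟨g, hg, hgi⟩)
    obtain ⟨g', hg', hg'x⟩ := (mem_inv_smul_iff' _ _ _).mp hx
    exact ⟨g' • x, hiO hg'x, g', hg', rfl⟩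
end

section
/- Let G be a Polish group with a fixed countable basis acting continuously on a Polish space X. For every countable ordinal α, the set H_α = {(x,y,n,k) : (x,V_k) ≤_α (y,V_n)} ⊆ X² × ω² is Borel. -/
open Set Topology Pointwise

section Aux

variable {G X : Type*} [SMul G X] [TopologicalSpace X] (Bas : Set (Set G))

lemma hle_zero (y x : X) (Vs Ws : Set G) :
    HLe Bas 0 y Vs x Ws ↔ closure ((· • y) '' Vs) ⊆ closure ((· • x) '' Ws) := by
  unfold HLe
  rw [Ordinal.limitRecOn_zero]

lemma hle_succ (α : Ordinal) (y x : X) (Vs Ws : Set G) :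
    HLe Bas (Order.succ α) y Vs x Ws ↔
      ∀ V' ∈ Bas, V' ⊆ Vs → ∃ W' ∈ Bas, W' ⊆ Ws ∧ HLe Bas α x W' y V' := by
  unfold HLe
  rw [Ordinal.limitRecOn_succ]

lemma hle_limit {o : Ordinal} (ho : Order.IsSuccLimit o) (y x : X) (Vs Ws : Set G) :
    HLe Bas o y Vs x Ws ↔ ∀ β < o, HLe Bas β y Vs x Ws := by
  unfold HLe
  rw [Ordinal.limitRecOn_limit _ _ _ _ ho]

end Aux

section Main

variable {G X : Type*} [Group G] [TopologicalSpace G] [IsTopologicalGroup G]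
    [PolishSpace G] [TopologicalSpace X] [PolishSpace X] [MeasurableSpace X] [BorelSpace X]
    [MulAction G X] [ContinuousSMul G X]

/-- The base relation `≤₁` gives a Borel (in fact, much simpler) set. -/
lemma hle_base_borel (V : ℕ → Set G) (hV : TopologicalSpace.IsTopologicalBasis (Set.range V)) :
    MeasurableSet {p : X × X × ℕ × ℕ |
      closure ((· • p.1) '' (V p.2.2.2)) ⊆ closure ((· • p.2.1) '' (V p.2.2.1))} := by
  obtain ⟨D, Dcnt, Ddense⟩ := TopologicalSpace.exists_countable_dense G
  obtain ⟨b, bcnt, -, bbasis⟩ := TopologicalSpace.exists_countable_basis X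
  have key : {p : X × X × ℕ × ℕ |
      closure ((· • p.1) '' (V p.2.2.2)) ⊆ closure ((· • p.2.1) '' (V p.2.2.1))} =
      ⋂ d ∈ D, ⋂ U ∈ b, {p : X × X × ℕ × ℕ |
        d ∈ V p.2.2.2 → d • p.1 ∈ U → ∃ g ∈ V p.2.2.1, g • p.2.1 ∈ U} := by
    ext ⟨x, y, n, k⟩
    simp only [mem_setOf_eq, mem_iInter]
    constructor
    · intro h d _ U hU hdk hdU
      have h1 : d • x ∈ closure ((· • y) '' (V n)) :=
        h (subset_closure (mem_image_of_mem _ hdk))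
      obtain ⟨z, hz1, g, hg, rfl⟩ := (bbasis.mem_closure_iff.mp h1) U hU hdU
      exact ⟨g, hg, hz1⟩
    · intro h
      apply closure_minimal _ isClosed_closure
      have hC : IsClosed {g : G | g • x ∈ closure ((· • y) '' (V n))} :=
        isClosed_closure.preimage (continuous_id.smul continuous_const)
      have hsub : V k ∩ D ⊆ {g : G | g • x ∈ closure ((· • y) '' (V n))} := by
        rintro d ⟨hdk, hdD⟩
        refine bbasis.mem_closure_iff.mpr fun U hU hdU => ?_
        obtain ⟨g, hg, hgy⟩ := h d hdD U hU hdk hdU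
        exact ⟨g • y, hgy, mem_image_of_mem _ hg⟩
      have : V k ⊆ {g : G | g • x ∈ closure ((· • y) '' (V n))} :=
        (Ddense.open_subset_closure_inter (hV.isOpen ⟨k, rfl⟩)).trans
          (hC.closure_subset_iff.mpr hsub)
      rintro _ ⟨g, hg, rfl⟩
      exact this hg
  rw [key]
  refine MeasurableSet.biInter Dcnt fun d _ => MeasurableSet.biInter bcnt fun U hU => ?_
  have hsetEq : {p : X × X × ℕ × ℕ |
      d ∈ V p.2.2.2 → d • p.1 ∈ U → ∃ g ∈ V p.2.2.1, g • p.2.1 ∈ U} =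
      ((fun p : X × X × ℕ × ℕ => p.2.2.2) ⁻¹' {m | d ∈ V m})ᶜ ∪
      (((fun p : X × X × ℕ × ℕ => d • p.1) ⁻¹' U)ᶜ ∪
        ⋃ m, ((fun p : X × X × ℕ × ℕ => p.2.2.1) ⁻¹' {m}) ∩
          ((fun p : X × X × ℕ × ℕ => p.2.1) ⁻¹' {z : X | ∃ g ∈ V m, g • z ∈ U})) := by
    ext ⟨x, y, n, k⟩
    simp only [mem_setOf_eq, mem_union, mem_compl_iff, mem_preimage, mem_iUnion, mem_inter_iff,
      mem_singleton_iff]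
    constructor
    · intro h
      by_cases h1 : d ∈ V k
      · by_cases h2 : d • x ∈ U
        · exact Or.inr (Or.inr ⟨n, rfl, h h1 h2⟩)
        · exact Or.inr (Or.inl h2)
      · exact Or.inl h1
    · rintro (h | h | ⟨m, rfl, hm⟩) h1 h2
      · exact absurd h1 h
      · exact absurd h2 h
      · exact hm
  rw [hsetEq]
  have hm3 : Measurable fun p : X × X × ℕ × ℕ => p.2.2.2 := measurable_snd.snd.snd
  have hm2 : Measurable fun p : X × X × ℕ × ℕ => p.2.2.1 := measurable_snd.snd.fst
  have hm1 : Measurable fun p : X × X × ℕ × ℕ => p.2.1 := measurable_snd.fst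
  refine ((hm3 (MeasurableSet.of_discrete)).compl).union
    (MeasurableSet.union ?_ (MeasurableSet.iUnion fun m => ?_))
  · exact (((bbasis.isOpen hU).preimage
      (continuous_const.smul continuous_fst)).measurableSet).compl
  · refine (hm2 (MeasurableSet.of_discrete)).inter (hm1 ?_)
    have : IsOpen {z : X | ∃ g ∈ V m, g • z ∈ U} := by
      have : {z : X | ∃ g ∈ V m, g • z ∈ U} = ⋃ g ∈ V m, (fun z : X => g • z) ⁻¹' U := by
        ext z; simp
      rw [this]
      exact isOpen_biUnion fun g _ =>
        (bbasis.isOpen hU).preimage (continuous_const.smul continuous_id)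
    exact this.measurableSet

theorem hLe_set_borel' (V : ℕ → Set G) (hV : TopologicalSpace.IsTopologicalBasis (Set.range V))
    (α : Ordinal) (hαc : α.card ≤ Cardinal.aleph0) :
    MeasurableSet {p : X × X × ℕ × ℕ |
      HLe (Set.range V) α p.1 (V p.2.2.2) p.2.1 (V p.2.2.1)} := by
  induction α using Ordinal.limitRecOn with
  | zero =>
    have : {p : X × X × ℕ × ℕ |
        HLe (Set.range V) 0 p.1 (V p.2.2.2) p.2.1 (V p.2.2.1)} =
        {p : X × X × ℕ × ℕ |
          closure ((· • p.1) '' (V p.2.2.2)) ⊆ closure ((· • p.2.1) '' (V p.2.2.1))} := by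
      ext p; exact hle_zero _ _ _ _ _
    rw [this]
    exact hle_base_borel V hV
  | add_one α ih =>
    rw [Ordinal.add_one_eq_succ]
    have hα : α.card ≤ Cardinal.aleph0 := by
      refine le_trans ?_ hαc
      exact Ordinal.card_le_card (le_of_lt (Order.lt_succ α))
    have ihm := ih hα
    have key : {p : X × X × ℕ × ℕ |
        HLe (Set.range V) (Order.succ α) p.1 (V p.2.2.2) p.2.1 (V p.2.2.1)} =
        ⋂ k', ({p : X × X × ℕ × ℕ | V k' ⊆ V p.2.2.2}ᶜ ∪
          ⋃ n', ({p : X × X × ℕ × ℕ | V n' ⊆ V p.2.2.1} ∩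
            ((fun p : X × X × ℕ × ℕ => (p.2.1, (p.1, (k', n')))) ⁻¹'
              {p : X × X × ℕ × ℕ |
                HLe (Set.range V) α p.1 (V p.2.2.2) p.2.1 (V p.2.2.1)}))) := by
      ext ⟨x, y, n, k⟩
      simp only [mem_setOf_eq, mem_iInter, mem_union, mem_compl_iff, mem_iUnion, mem_inter_iff,
        mem_preimage]
      rw [hle_succ]
      simp only [Set.forall_mem_range]
      constructor
      · intro h k'
        by_cases hk' : V k' ⊆ V k
        · obtain ⟨W', ⟨n', rfl⟩, hW', h'⟩ := h k' hk'
          exact Or.inr ⟨n', hW', h'⟩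
        · exact Or.inl hk'
      · intro h k' hk'
        rcases h k' with h' | ⟨n', hn', h'⟩
        · exact absurd hk' h'
        · exact ⟨V n', ⟨n', rfl⟩, hn', h'⟩
    rw [key]
    have hm3 : Measurable fun p : X × X × ℕ × ℕ => p.2.2.2 := measurable_snd.snd.snd
    have hm2 : Measurable fun p : X × X × ℕ × ℕ => p.2.2.1 := measurable_snd.snd.fst
    refine MeasurableSet.iInter fun k' => MeasurableSet.union ?_ ?_
    · exact (hm3 (MeasurableSet.of_discrete : MeasurableSet {m | V k' ⊆ V m})).compl
    · refine MeasurableSet.iUnion fun n' => MeasurableSet.inter ?_ ?_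
      · exact hm2 (MeasurableSet.of_discrete : MeasurableSet {m | V n' ⊆ V m})
      · exact ihm.preimage
          ((measurable_snd.fst).prodMk (measurable_fst.prodMk measurable_const))
  | limit o ho ih =>
    have key : {p : X × X × ℕ × ℕ |
        HLe (Set.range V) o p.1 (V p.2.2.2) p.2.1 (V p.2.2.1)} =
        ⋂ β ∈ Set.Iio o, {p : X × X × ℕ × ℕ |
          HLe (Set.range V) β p.1 (V p.2.2.2) p.2.1 (V p.2.2.1)} := by
      ext p
      simp only [mem_setOf_eq, mem_iInter, mem_Iio]
      exact hle_limit _ ho _ _ _ _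
    rw [key]
    have hcnt : (Set.Iio o).Countable := by
      rw [← Set.countable_coe_iff, ← Cardinal.mk_le_aleph0_iff, Ordinal.mk_Iio_ordinal]
      simpa using Cardinal.lift_le.mpr hαc
    refine MeasurableSet.biInter hcnt fun β hβ => ih β hβ ?_
    exact le_trans (Ordinal.card_le_card (le_of_lt hβ)) hαc

end Main

/-- For every countable ordinal `α`, the set
`H_α = {(x,y,n,k) : (x,V_k) ≤_{1+α} (y,V_n)}` is Borel. -/
theorem hLe_set_borel {G X : Type*} [Group G] [TopologicalSpace G] [IsTopologicalGroup G]
    [PolishSpace G] [TopologicalSpace X] [PolishSpace X] [MeasurableSpace X] [BorelSpace X]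
    [MulAction G X] [ContinuousSMul G X]
    (V : ℕ → Set G) (hV : TopologicalSpace.IsTopologicalBasis (Set.range V))
    {α : Ordinal} (hαc : α.card ≤ Cardinal.aleph0) :
    MeasurableSet {p : X × X × ℕ × ℕ |
      HLe (Set.range V) α p.1 (V p.2.2.2) p.2.1 (V p.2.2.1)} :=
  hLe_set_borel' V hV α hαc
end

section
/- Let G be a Polish group acting continuously on a Polish space X, and let λ be a countable limit ordinal. If B ⊆ X is a G-invariant Π⁰_λ set, then B can be written as an intersection of countably many G-invariant Borel sets each of Borel rank strictly less than λ. -/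
open Set Topology Pointwise

/-- The Borel pointclass `Σ⁰_α`:  `Σ⁰_1` is the open sets, and for `α > 1` a set
is `Σ⁰_α` iff it is a countable union of sets whose complements are `Σ⁰_β`, `β < α`. -/
def SigmaClass (X : Type*) [TopologicalSpace X] (α : Ordinal) : Set (Set X) :=
  if α ≤ 1 then {s | IsOpen s}
  else {s | ∃ f : ℕ → Set X,
    (∀ n, ∃ β, ∃ _ : β < α, (f n)ᶜ ∈ SigmaClass X β) ∧ s = ⋃ n, f n}
termination_by α

/-- The multiplicative Borel pointclass `Π⁰_α`. -/
def PiClass (X : Type*) [TopologicalSpace X] (α : Ordinal) : Set (Set X) :=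
  {s | sᶜ ∈ SigmaClass X α}

set_option linter.unusedVariables false
set_option linter.unusedSectionVars false

section Basic
variable {X : Type*} [TopologicalSpace X]

lemma isOpen_mem_sigmaClass {s : Set X} (hs : IsOpen s) {α : Ordinal} (hα : α ≤ 1) :
    s ∈ SigmaClass X α := by rw [SigmaClass, if_pos hα]; exact hs

lemma empty_mem_sigmaClass (α : Ordinal) : (∅ : Set X) ∈ SigmaClass X α := by
  rw [SigmaClass]
  split
  · exact isOpen_empty
  · rename_i h
    refine ⟨fun _ => ∅, fun n => ⟨0, ⟨lt_of_lt_of_le zero_lt_one (le_of_not_ge h), ?_⟩⟩, (iUnion_const _).symm⟩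
    rw [compl_empty]
    exact isOpen_mem_sigmaClass isOpen_univ zero_le_one

lemma univ_mem_sigmaClass (α : Ordinal) : (univ : Set X) ∈ SigmaClass X α := by
  rw [SigmaClass]
  split
  · exact isOpen_univ
  · rename_i h
    refine ⟨fun _ => univ, fun n => ⟨0, ⟨lt_of_lt_of_le zero_lt_one (le_of_not_ge h), ?_⟩⟩, (iUnion_const _).symm⟩
    rw [compl_univ]
    exact isOpen_mem_sigmaClass isOpen_empty zero_le_one

/-- countable intersections of `Σ⁰_β` sets are `Π⁰_{β+2}`. -/
lemma iInter_mem_piClass {h : ℕ → Set X} {β : Ordinal}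
    (hh : ∀ k, h k ∈ SigmaClass X β) :
    (⋂ k, h k) ∈ PiClass X (Order.succ (Order.succ β)) := by
  show (⋂ k, h k)ᶜ ∈ SigmaClass X _
  rw [compl_iInter, SigmaClass, if_neg]
  · exact ⟨fun k => (h k)ᶜ, fun k => ⟨β, ⟨lt_trans (Order.lt_succ β) (Order.lt_succ _),
      by rw [compl_compl]; exact hh k⟩⟩, rfl⟩
  · intro hle
    rw [Order.succ_le_iff, ← Ordinal.succ_zero, Order.succ_lt_succ_iff] at hle
    exact absurd hle (by simp)

lemma sigmaClass_baireMeasurable_preimage {G : Type*} [TopologicalSpace G] {f : G → X}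
    (hf : Continuous f) (α : Ordinal) :
    ∀ A ∈ SigmaClass X α, BaireMeasurableSet (f ⁻¹' A) := by
  induction α using Ordinal.induction with
  | h α IH =>
    intro A hA
    rw [SigmaClass] at hA
    split at hA
    · exact (hA.preimage hf).baireMeasurableSet
    · obtain ⟨s, hs, rfl⟩ := hA
      rw [preimage_iUnion]
      refine .iUnion fun n => ?_
      obtain ⟨β, hβ, hc⟩ := hs n
      have := IH β hβ _ hc
      rw [preimage_compl] at this
      exact this.of_compl

end Basic

section Cat
variable {G : Type*} [TopologicalSpace G] [BaireSpace G]

lemma IsMeagre.union' {s t : Set G} (hs : IsMeagre s) (ht : IsMeagre t) : IsMeagre (s ∪ t) := by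
  show (s ∪ t)ᶜ ∈ residual _
  rw [compl_union]
  exact Filter.inter_mem hs ht

lemma not_isMeagre_open {U : Set G} (hU : IsOpen U) (hne : U.Nonempty) : ¬ IsMeagre U := by
  intro h
  obtain ⟨x, hx1, hx2⟩ := (dense_of_mem_residual h).inter_open_nonempty U hU hne
  exact hx2 hx1

lemma symmdiff_meagre {T U : Set G} (h : T =ᵇ U) : IsMeagre ((T \ U) ∪ (U \ T)) := by
  rw [IsMeagre]
  filter_upwards [h] with x hx
  simp only [mem_union, mem_diff, mem_compl_iff]
  rw [eq_iff_iff] at hx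
  tauto

/-- BP localization, one direction generic. -/
lemma not_isMeagre_inter_of_subset {T U V : Set G} (hV : IsOpen V) (hne : V.Nonempty)
    (hVU : V ⊆ U) (hm : IsMeagre (V \ T)) : ¬ IsMeagre (U ∩ T) := by
  intro h
  refine not_isMeagre_open hV hne ((hm.union' h).mono ?_)
  intro x hx
  by_cases hxT : x ∈ T
  · exact Or.inr ⟨hVU hx, hxT⟩
  · exact Or.inl ⟨hx, hxT⟩

lemma not_isMeagre_inter_iff {T U : Set G} (hT : BaireMeasurableSet T) (hU : IsOpen U) :
    ¬ IsMeagre (U ∩ T) ↔ ∃ V, IsOpen V ∧ V.Nonempty ∧ V ⊆ U ∧ IsMeagre (V \ T) := by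
  constructor
  · intro h
    obtain ⟨O, hOo, hTO⟩ := hT.residualEq_isOpen
    have hsd := symmdiff_meagre hTO
    refine ⟨O ∩ U, hOo.inter hU, ?_, inter_subset_right, ?_⟩
    · by_contra hne
      rw [not_nonempty_iff_eq_empty] at hne
      refine h (hsd.mono ?_)
      intro x ⟨hx1, hx2⟩
      have : x ∉ O := fun hO => by
        have : x ∈ O ∩ U := ⟨hO, hx1⟩
        rw [hne] at this; exact this
      exact Or.inl ⟨hx2, this⟩
    · exact hsd.mono fun x ⟨⟨hxO, _⟩, hxT⟩ => Or.inr ⟨hxO, hxT⟩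
  · rintro ⟨V, hVo, hne, hVU, hm⟩
    exact fun h => not_isMeagre_inter_of_subset hVo hne hVU hm h

lemma isMeagre_diff_iff {T U : Set G} (hT : BaireMeasurableSet T) (hU : IsOpen U) :
    IsMeagre (U \ T) ↔ ∀ V, IsOpen V → V.Nonempty → V ⊆ U → ¬ IsMeagre (V ∩ T) := by
  constructor
  · intro h V hVo hne hVU hm
    refine not_isMeagre_open hVo hne ((hm.union' h).mono ?_)
    intro x hx
    by_cases hxT : x ∈ T
    · exact Or.inl ⟨hx, hxT⟩
    · exact Or.inr ⟨hVU hx, hxT⟩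
  · intro h
    by_contra hm
    rw [diff_eq] at hm
    obtain ⟨V, hVo, hne, hVU, hm'⟩ := (not_isMeagre_inter_iff hT.compl hU).1 hm
    refine h V hVo hne hVU ?_
    have : V ∩ T ⊆ V \ Tᶜ := fun x ⟨h1, h2⟩ => ⟨h1, fun hc => hc h2⟩
    exact hm'.mono this

end Cat

lemma haveBaire {G : Type*} [TopologicalSpace G] [PolishSpace G] : BaireSpace G := by
  letI := TopologicalSpace.upgradeIsCompletelyMetrizable G; infer_instance
section Transform
variable {G X : Type*} [Group G] [TopologicalSpace G] [IsTopologicalGroup G] [PolishSpace G]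
  [TopologicalSpace X] [MulAction G X] [ContinuousSMul G X]

/-- the section `{g | g • x ∈ A}`. -/
def sect (A : Set X) (x : X) : Set G := (fun g : G => g • x) ⁻¹' A

lemma continuous_smul_x (x : X) : Continuous (fun g : G => g • x) :=
  continuous_id.smul continuous_const

lemma sect_baireMeasurable {A : Set X} {α : Ordinal} (hA : A ∈ SigmaClass X α) (x : X) :
    BaireMeasurableSet (sect (G := G) A x) := by
  have := sigmaClass_baireMeasurable_preimage (X := X) (G := G)
    (f := fun g : G => g • x) (continuous_id.smul continuous_const) α A hA
  exact this

/-- The category quantifier `∃* g ∈ U, g • x ∈ A`. -/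
def Dd (A : Set X) (U : Set G) : Set X := {x | ¬ IsMeagre (U ∩ sect A x)}

/-- The category quantifier `∀* g ∈ U, g • x ∈ A`. -/
def Ds (A : Set X) (U : Set G) : Set X := {x | IsMeagre (U \ sect A x)}

lemma Dd_isOpen {A : Set X} (hA : IsOpen A) {U : Set G} (hU : IsOpen U) : IsOpen (Dd A U) := by
  have hb := haveBaire (G := G)
  have heq : Dd A U = ⋃ g ∈ U, (fun x : X => g • x) ⁻¹' A := by
    ext x
    simp only [Dd, mem_setOf_eq, mem_iUnion, exists_prop]
    constructor
    · intro h
      by_contra hc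
      push_neg at hc
      apply h
      have he : U ∩ sect A x = ∅ := by
        ext g
        simp only [mem_inter_iff, mem_empty_iff_false, iff_false]
        rintro ⟨h1, h2⟩
        exact hc g h1 h2
      rw [he]; exact IsMeagre.empty
    · rintro ⟨g, hg, hgx⟩
      exact not_isMeagre_open (hU.inter (hA.preimage (continuous_smul_x x))) ⟨g, hg, hgx⟩
  rw [heq]
  exact isOpen_biUnion fun g _ => hA.preimage (continuous_const_smul g)

lemma Ds_isClosed {A : Set X} (hA : IsClosed A) {U : Set G} (hU : IsOpen U) :
    IsClosed (Ds A U) := by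
  have hb := haveBaire (G := G)
  have heq : Ds A U = ⋂ g ∈ U, (fun x : X => g • x) ⁻¹' A := by
    ext x
    simp only [Ds, mem_setOf_eq, mem_iInter]
    constructor
    · intro h g hg
      by_contra hc
      exact not_isMeagre_open (hU.inter (hA.isOpen_compl.preimage (continuous_smul_x x)))
        ⟨g, hg, hc⟩ (h.mono (fun y (hy : y ∈ U ∩ (fun g : G => g • x) ⁻¹' Aᶜ) => (show y ∈ U \ sect A x from ⟨hy.1, hy.2⟩)))
    · intro h
      have he : U \ sect A x = ∅ := by
        ext g
        simp only [mem_diff, mem_empty_iff_false, iff_false]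
        rintro ⟨h1, h2⟩
        exact h2 (h g h1)
      rw [he]; exact IsMeagre.empty
  rw [heq]
  exact isClosed_biInter fun g _ => hA.preimage (continuous_const_smul g)

lemma Dd_iUnion (A : ℕ → Set X) (U : Set G) : Dd (⋃ n, A n) U = ⋃ n, Dd (A n) U := by
  ext x
  simp only [Dd, mem_setOf_eq, mem_iUnion]
  have he : U ∩ sect (⋃ n, A n) x = ⋃ n, U ∩ sect (A n) x := by
    ext g; simp only [sect, mem_preimage, mem_inter_iff, mem_iUnion]; tauto
  rw [he]
  constructor
  · intro h
    by_contra hc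
    push_neg at hc
    exact h (isMeagre_iUnion hc)
  · rintro ⟨n, hn⟩ h
    exact hn (h.mono (subset_iUnion (fun n => U ∩ sect (A n) x) n))

lemma Ds_iInter (A : ℕ → Set X) (U : Set G) : Ds (⋂ n, A n) U = ⋂ n, Ds (A n) U := by
  ext x
  simp only [Ds, mem_setOf_eq, mem_iInter]
  have he : U \ sect (⋂ n, A n) x = ⋃ n, U \ sect (A n) x := by
    ext g; simp only [sect, mem_preimage, mem_diff, mem_iUnion, mem_iInter, not_forall]; tauto
  rw [he]
  constructor
  · intro h n
    exact h.mono (subset_iUnion (fun n => U \ sect (A n) x) n)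
  · intro h
    exact isMeagre_iUnion h

end Transform

section Enum
open TopologicalSpace

/-- An enumeration of (a superset of) a countable basis. -/
lemma exists_enum (G : Type*) [TopologicalSpace G] [SecondCountableTopology G] :
    ∃ e : ℕ → Set G, (∀ k, IsOpen (e k)) ∧
      ∀ V : Set G, IsOpen V → V.Nonempty → ∃ k, (e k).Nonempty ∧ e k ⊆ V := by
  obtain ⟨e, he⟩ := ((countable_countableBasis G).insert ∅).exists_eq_range
    (insert_nonempty _ _)
  refine ⟨e, fun k => ?_, fun V hV hne => ?_⟩
  · have : e k ∈ insert ∅ (countableBasis G) := he ▸ mem_range_self k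
    rcases this with h | h
    · rw [h]; exact isOpen_empty
    · exact isOpen_of_mem_countableBasis h
  · obtain ⟨x, hx⟩ := hne
    obtain ⟨W, hWb, hxW, hWV⟩ := (isBasis_countableBasis G).exists_subset_of_mem_open hx hV
    have hmem : W ∈ insert ∅ (countableBasis G) := mem_insert_of_mem _ hWb
    rw [he] at hmem
    obtain ⟨k, rfl⟩ := hmem
    exact ⟨k, ⟨x, hxW⟩, hWV⟩

end Enum

section Bridge
variable {G X : Type*} [Group G] [TopologicalSpace G] [IsTopologicalGroup G] [PolishSpace G]
  [TopologicalSpace X] [MulAction G X] [ContinuousSMul G X]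

lemma Ds_mono {A : Set X} {V W : Set G} (h : V ⊆ W) : Ds A W ⊆ Ds A V :=
  fun _ hx => hx.mono (diff_subset_diff_left h)

lemma Dd_mono {A : Set X} {V W : Set G} (h : V ⊆ W) : Dd A V ⊆ Dd A W :=
  fun _ hx hm => hx (hm.mono (inter_subset_inter_left _ h))

open Classical in
lemma Dd_eq_iUnion_Ds {e : ℕ → Set G} (he1 : ∀ k, IsOpen (e k))
    (he2 : ∀ V : Set G, IsOpen V → V.Nonempty → ∃ k, (e k).Nonempty ∧ e k ⊆ V)
    {A : Set X} (hBP : ∀ x : X, BaireMeasurableSet (sect (G := G) A x))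
    {U : Set G} (hU : IsOpen U) :
    Dd A U = ⋃ k, if (e k).Nonempty ∧ e k ⊆ U then Ds A (e k) else ∅ := by
  have hb := haveBaire (G := G)
  ext x
  simp only [Dd, mem_setOf_eq, mem_iUnion]
  constructor
  · intro h
    obtain ⟨V, hVo, hVne, hVU, hVm⟩ := (not_isMeagre_inter_iff (hBP x) hU).1 h
    obtain ⟨k, hkne, hkV⟩ := he2 V hVo hVne
    refine ⟨k, ?_⟩
    rw [if_pos ⟨hkne, hkV.trans hVU⟩]
    exact Ds_mono hkV (show x ∈ Ds A V from hVm)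
  · rintro ⟨k, hk⟩
    split at hk
    · rename_i hcond
      exact (not_isMeagre_inter_iff (hBP x) hU).2 ⟨e k, he1 k, hcond.1, hcond.2, hk⟩
    · exact absurd hk (notMem_empty x)

open Classical in
lemma Ds_eq_iInter_Dd {e : ℕ → Set G} (he1 : ∀ k, IsOpen (e k))
    (he2 : ∀ V : Set G, IsOpen V → V.Nonempty → ∃ k, (e k).Nonempty ∧ e k ⊆ V)
    {A : Set X} (hBP : ∀ x : X, BaireMeasurableSet (sect (G := G) A x))
    {U : Set G} (hU : IsOpen U) :
    Ds A U = ⋂ k, if (e k).Nonempty ∧ e k ⊆ U then Dd A (e k) else univ := by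
  have hb := haveBaire (G := G)
  ext x
  simp only [Ds, mem_setOf_eq, mem_iInter]
  rw [show IsMeagre (U \ sect A x) ↔ x ∈ Ds A U from Iff.rfl]
  constructor
  · intro h k
    split
    · rename_i hcond
      exact (isMeagre_diff_iff (hBP x) hU).1 h (e k) (he1 k) hcond.1 hcond.2
    · exact mem_univ x
  · intro h
    refine (isMeagre_diff_iff (hBP x) hU).2 ?_
    intro V hVo hVne hVU
    obtain ⟨k, hkne, hkV⟩ := he2 V hVo hVne
    have := h k
    rw [if_pos ⟨hkne, hkV.trans hVU⟩] at this
    exact Dd_mono hkV this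
end Bridge

section Rank
variable {G X : Type*} [Group G] [TopologicalSpace G] [IsTopologicalGroup G] [PolishSpace G]
  [TopologicalSpace X] [MulAction G X] [ContinuousSMul G X]

open Classical in
lemma rank_lemma (α : Ordinal) :
    (∀ A ∈ SigmaClass X α, ∀ U : Set G, IsOpen U → Dd A U ∈ SigmaClass X α) ∧
    (∀ A ∈ PiClass X α, ∀ U : Set G, IsOpen U → Ds A U ∈ PiClass X α) := by
  obtain ⟨e, he1, he2⟩ := exists_enum G
  induction α using Ordinal.induction with
  | h α IH =>
  by_cases h1 : α ≤ 1
  · constructor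
    · intro A hA U hU
      rw [SigmaClass, if_pos h1] at hA ⊢
      exact Dd_isOpen hA hU
    · intro A hA U hU
      have hA' : Aᶜ ∈ SigmaClass X α := hA
      rw [SigmaClass, if_pos h1] at hA'
      show (Ds A U)ᶜ ∈ SigmaClass X α
      rw [SigmaClass, if_pos h1]
      exact (Ds_isClosed (isOpen_compl_iff.mp hA') hU).isOpen_compl
  · constructor
    · intro A hA U hU
      rw [SigmaClass, if_neg h1] at hA
      obtain ⟨f, hf, rfl⟩ := hA
      choose β hβ hfc using hf
      have hBP : ∀ n (x : X), BaireMeasurableSet (sect (G := G) (f n) x) := fun n x =>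
        BaireMeasurableSet.of_compl (sect_baireMeasurable (G := G) (hfc n) x)
      have heq : ∀ n, Dd (f n) U
          = ⋃ k, if (e k).Nonempty ∧ e k ⊆ U then Ds (f n) (e k) else ∅ :=
        fun n => Dd_eq_iUnion_Ds he1 he2 (hBP n) hU
      rw [Dd_iUnion, SigmaClass, if_neg h1]
      refine ⟨fun m => if (e m.unpair.2).Nonempty ∧ e m.unpair.2 ⊆ U then
          Ds (f m.unpair.1) (e m.unpair.2) else ∅, fun m => ?_, ?_⟩
      · refine ⟨β m.unpair.1, hβ m.unpair.1, ?_⟩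
        dsimp only
        split
        · exact (IH _ (hβ _)).2 _ (hfc _) _ (he1 _)
        · rw [compl_empty]; exact univ_mem_sigmaClass _
      · simp_rw [heq]
        exact (Set.iUnion_unpair fun n k =>
          if (e k).Nonempty ∧ e k ⊆ U then Ds (f n) (e k) else ∅).symm
    · intro A hA U hU
      have hA' : Aᶜ ∈ SigmaClass X α := hA
      rw [SigmaClass, if_neg h1] at hA'
      obtain ⟨f, hf, hAc⟩ := hA'
      choose β hβ hfc using hf
      have hAeq : A = ⋂ n, (f n)ᶜ := by rw [← compl_iUnion, ← hAc, compl_compl]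
      have hBP : ∀ n (x : X), BaireMeasurableSet (sect (G := G) ((f n)ᶜ) x) :=
        fun n x => sect_baireMeasurable (G := G) (hfc n) x
      have heq : ∀ n, Ds ((f n)ᶜ) U
          = ⋂ k, if (e k).Nonempty ∧ e k ⊆ U then Dd ((f n)ᶜ) (e k) else univ :=
        fun n => Ds_eq_iInter_Dd he1 he2 (hBP n) hU
      rw [hAeq, Ds_iInter]
      show (⋂ n, Ds ((f n)ᶜ) U)ᶜ ∈ SigmaClass X α
      rw [SigmaClass, if_neg h1]
      refine ⟨fun m => (if (e m.unpair.2).Nonempty ∧ e m.unpair.2 ⊆ U then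
          Dd ((f m.unpair.1)ᶜ) (e m.unpair.2) else univ)ᶜ, fun m => ?_, ?_⟩
      · refine ⟨β m.unpair.1, hβ m.unpair.1, ?_⟩
        dsimp only
        rw [compl_compl]
        split
        · exact (IH _ (hβ _)).1 _ (hfc _) _ (he1 _)
        · exact univ_mem_sigmaClass _
      · simp_rw [heq, compl_iInter]
        exact (Set.iUnion_unpair fun n k =>
          (if (e k).Nonempty ∧ e k ⊆ U then Dd ((f n)ᶜ) (e k) else univ)ᶜ).symm

end Rank

section Invariance
variable {G X : Type*} [Group G] [TopologicalSpace G] [IsTopologicalGroup G] [PolishSpace G]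
  [TopologicalSpace X] [MulAction G X] [ContinuousSMul G X]

lemma Ds_univ_invariant {C : Set X} (h : G) {x : X} (hx : x ∈ Ds C (univ : Set G)) :
    h • x ∈ Ds C (univ : Set G) := by
  simp only [Ds, mem_setOf_eq] at hx ⊢
  have heq : (univ \ sect C (h • x) : Set G) = (· * h) ⁻¹' (univ \ sect C x) := by
    ext g
    simp only [mem_diff, mem_univ, true_and, mem_preimage, sect, smul_smul]
  rw [heq]
  exact hx.preimage_of_isOpenMap (continuous_mul_right h) (isOpenMap_mul_right h)

end Invariance

/-- A `G`-invariant `Π⁰_λ` set, `λ` a countable limit ordinal, is a countable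
intersection of `G`-invariant Borel sets of Borel rank `< λ`. -/
theorem invariant_pi_limit_eq_iInter {G X : Type*} [Group G] [TopologicalSpace G]
    [IsTopologicalGroup G] [PolishSpace G] [TopologicalSpace X] [PolishSpace X]
    [MulAction G X] [ContinuousSMul G X]
    {l : Ordinal} (hlim : Order.IsSuccLimit l) (hlc : l.card ≤ Cardinal.aleph0)
    {B : Set X} (hinv : ∀ g : G, ∀ x ∈ B, g • x ∈ B) (hB : B ∈ PiClass X l) :
    ∃ f : ℕ → Set X, (∀ n, ∀ g : G, ∀ x ∈ f n, g • x ∈ f n) ∧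
      (∀ n, ∃ ξ, ξ < l ∧ f n ∈ SigmaClass X ξ ∪ PiClass X ξ) ∧ B = ⋂ n, f n := by
  obtain ⟨e, he1, he2⟩ := exists_enum G
  have hb := haveBaire (G := G)
  have hne : Nonempty G := ⟨1⟩
  have h1 : ¬ l ≤ 1 := not_le.2 (Ordinal.one_lt_of_isSuccLimit hlim)
  have hB' : Bᶜ ∈ SigmaClass X l := hB
  rw [SigmaClass, if_neg h1] at hB'
  obtain ⟨f, hf, hBc⟩ := hB'
  choose β hβ hfc using hf
  have hBeq : B = ⋂ n, (f n)ᶜ := by rw [← compl_iUnion, ← hBc, compl_compl]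
  refine ⟨fun n => Ds ((f n)ᶜ) (univ : Set G), fun n g x hx => Ds_univ_invariant g hx,
    fun n => ⟨Order.succ (Order.succ (β n)), hlim.succ_lt (hlim.succ_lt (hβ n)), ?_⟩, ?_⟩
  · right
    dsimp only
    rw [Ds_eq_iInter_Dd he1 he2 (fun x => sect_baireMeasurable (G := G) (hfc n) x) isOpen_univ]
    refine iInter_mem_piClass fun k => ?_
    split
    · exact (rank_lemma (β n)).1 _ (hfc n) _ (he1 k)
    · exact univ_mem_sigmaClass _
  · rw [hBeq]
    apply Subset.antisymm
    · intro x hx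
      have hxB : x ∈ B := by rw [hBeq]; exact hx
      refine mem_iInter.2 fun n => ?_
      show IsMeagre (univ \ sect ((f n)ᶜ) x)
      have hemp : (univ \ sect ((f n)ᶜ) x : Set G) = ∅ := by
        ext g
        simp only [mem_diff, mem_univ, true_and, mem_empty_iff_false, iff_false, not_not]
        show g • x ∈ (f n)ᶜ
        have hgB : g • x ∈ B := hinv g x hxB
        rw [hBeq] at hgB
        exact mem_iInter.1 hgB n
      rw [hemp]
      exact IsMeagre.empty
    · intro x hx
      have hm : IsMeagre (⋃ n, (univ \ sect ((f n)ᶜ) x : Set G)) :=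
        isMeagre_iUnion fun n => mem_iInter.1 hx n
      have hres : (⋃ n, (univ \ sect ((f n)ᶜ) x : Set G))ᶜ ∈ residual G := hm
      obtain ⟨g, hg⟩ := (dense_of_mem_residual hres).nonempty
      simp only [mem_compl_iff, mem_iUnion, not_exists, mem_diff, mem_univ, true_and,
        not_not] at hg
      have hgB : g • x ∈ B := by
        rw [hBeq]
        exact mem_iInter.2 fun n => hg n
      have hx' := hinv g⁻¹ _ hgB
      rw [inv_smul_smul] at hx'
      rw [hBeq] at hx'
      exact hx'
end
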